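/- Let Y = ℝ^k × X be a product metric space, where X is a metric space in which every point lies on no line (X contains no isometrically embedded copy of ℝ) and every isometry of X fixes a distinguished point x₀. Then every isometry g of Y maps the slice ℝ^k × {x₀} into itself. -/

import Mathlib

/-- `ℝ^k` with the Euclidean metric. -/
noncomputable abbrev E (k : ℕ) := EuclideanSpace ℝ (Fin k)

/-- The product `Y = ℝ^k × X` with the `ℓ²` product metric
`d((u,a),(v,b))² = |u−v|² + d_X(a,b)²`. -/
noncomputable abbrev Y (k : ℕ) (X : Type*) [MetricSpace X] := WithLp 2 (E k × X)

section aux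

variable {k : ℕ} {X : Type*} [MetricSpace X]

lemma dist_sq_Y (p q : Y k X) :
    dist p q ^ 2 = dist p.fst q.fst ^ 2 + dist p.snd q.snd ^ 2 := by
  have h := WithLp.prod_dist_eq_add (p := 2) (by norm_num) p q
  rw [h, ENNReal.toReal_ofNat, ← Real.rpow_natCast _ 2, ← Real.rpow_mul (by positivity)]
  norm_num

set_option maxHeartbeats 800000 in
/-- Rigidity of the triangle equality in an ℓ² product. -/
lemma rigid {a b c d e f p q : ℝ} (ha : 0 ≤ a) (hb : 0 ≤ b) (hc : 0 ≤ c) (hd : 0 ≤ d)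
    (he : 0 ≤ e) (hf : 0 ≤ f) (hp : 0 < p) (hq : 0 < q)
    (h1 : a ^ 2 + b ^ 2 = p ^ 2) (h2 : c ^ 2 + d ^ 2 = q ^ 2)
    (h3 : e ^ 2 + f ^ 2 = (p + q) ^ 2)
    (h4 : e ≤ a + c) (h5 : f ≤ b + d) :
    f = b + d ∧ b * q = d * p := by
  have hcs2 : (a * c + b * d) ^ 2 ≤ (p * q) ^ 2 := by nlinarith [sq_nonneg (a * d - b * c)]
  have hpq : 0 < p * q := mul_pos hp hq
  have hcbd : 0 ≤ a * c + b * d := by positivity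
  have hcs : a * c + b * d ≤ p * q := by nlinarith
  have he2 : e ^ 2 ≤ (a + c) ^ 2 := pow_le_pow_left₀ he h4 2
  have hf2 : f ^ 2 ≤ (b + d) ^ 2 := pow_le_pow_left₀ hf h5 2
  have hsum : (a + c) ^ 2 + (b + d) ^ 2 ≤ (p + q) ^ 2 := by nlinarith
  have hfe : f ^ 2 = (b + d) ^ 2 := by linarith
  have hee : e ^ 2 = (a + c) ^ 2 := by linarith
  have hEF : (a + c) ^ 2 + (b + d) ^ 2 = (p + q) ^ 2 := by linarith
  have hceq : a * c + b * d = p * q := by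
    linear_combination (1/2) * hEF - (1/2) * h1 - (1/2) * h2
  have hadbc : (a * d - b * c) ^ 2 = 0 := by
    have hid : (a * d - b * c) ^ 2
        = (a ^ 2 + b ^ 2) * (c ^ 2 + d ^ 2) - (a * c + b * d) ^ 2 := by ring
    rw [hid, h1, h2, hceq]; ring
  have had : a * d = b * c := by
    have h0 := (pow_eq_zero_iff two_ne_zero).mp hadbc
    linarith [sub_eq_zero.mp h0]
  have hbq : (b * q) ^ 2 = (d * p) ^ 2 := by
    linear_combination d ^ 2 * h1 - b ^ 2 * h2 - (a * d + b * c) * had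
  exact ⟨(sq_eq_sq₀ hf (by positivity)).mp hfe,
    (sq_eq_sq₀ (by positivity) (by positivity)).mp hbq⟩

/-- Any isometric line in the product `Y = ℝ^k × X` has constant `X`-component, provided
`X` contains no lines. -/
lemma line_snd_const (hnoline : ¬ ∃ φ : ℝ → X, Isometry φ)
    (φ : ℝ → Y k X) (hφ : Isometry φ) (s t : ℝ) : (φ s).snd = (φ t).snd := by
  set D : ℝ → ℝ → ℝ := fun s t => dist (φ s).fst (φ t).fst with hD
  set F : ℝ → ℝ → ℝ := fun s t => dist (φ s).snd (φ t).snd with hF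
  have hDnn : ∀ s t, 0 ≤ D s t := fun s t => dist_nonneg
  have hFnn : ∀ s t, 0 ≤ F s t := fun s t => dist_nonneg
  have hkey : ∀ s t : ℝ, D s t ^ 2 + F s t ^ 2 = (t - s) ^ 2 := by
    intro s t
    have h1 := hφ.dist_eq s t
    show dist (φ s).fst (φ t).fst ^ 2 + dist (φ s).snd (φ t).snd ^ 2 = (t - s) ^ 2
    rw [← dist_sq_Y, h1, Real.dist_eq, sq_abs]
    ring
  have step : ∀ s t u : ℝ, s < t → t < u →
      F s u = F s t + F t u ∧ F s t * (u - t) = F t u * (t - s) := by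
    intro s t u hst htu
    have h1 : D s t ^ 2 + F s t ^ 2 = (t - s) ^ 2 := hkey s t
    have h2 : D t u ^ 2 + F t u ^ 2 = (u - t) ^ 2 := hkey t u
    have h3 : D s u ^ 2 + F s u ^ 2 = ((t - s) + (u - t)) ^ 2 := by
      rw [hkey s u]; ring
    have h4 : D s u ≤ D s t + D t u := dist_triangle _ _ _
    have h5 : F s u ≤ F s t + F t u := dist_triangle _ _ _
    exact rigid (hDnn s t) (hFnn s t) (hDnn t u) (hFnn t u) (hDnn s u) (hFnn s u)
      (by linarith) (by linarith) h1 h2 h3 h4 h5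
  have P1 : ∀ s t u : ℝ, s < t → t < u → F s u * (t - s) = F s t * (u - s) := by
    intro s t u hst htu
    obtain ⟨hadd, hpar⟩ := step s t u hst htu
    linear_combination (t - s) * hadd - hpar
  have P2 : ∀ s t u : ℝ, s < t → t < u → F s u * (u - t) = F t u * (u - s) := by
    intro s t u hst htu
    obtain ⟨hadd, hpar⟩ := step s t u hst htu
    linear_combination (u - t) * hadd + hpar
  have hQ : ∀ m s t M : ℝ, m < s → s < t → t < M →
      F s t * (M - m) = F m M * (t - s) := by
    intro m s t M hms hst htM
    have A1 : F m t * (t - s) = F s t * (t - m) := P2 m s t hms hst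
    have A2 : F m M * (t - m) = F m t * (M - m) := P1 m t M (hms.trans hst) htM
    have htm : (0:ℝ) < t - m := by linarith
    have hmain : F s t * (M - m) * (t - m) = F m M * (t - s) * (t - m) := by
      calc F s t * (M - m) * (t - m) = F s t * (t - m) * (M - m) := by ring
        _ = F m t * (t - s) * (M - m) := by rw [A1]
        _ = F m t * (M - m) * (t - s) := by ring
        _ = F m M * (t - m) * (t - s) := by rw [A2]
        _ = F m M * (t - s) * (t - m) := by ring
    exact mul_right_cancel₀ (ne_of_gt htm) hmain
  set l : ℝ := F 0 1 with hl
  have claim : ∀ s t : ℝ, s ≤ t → F s t = l * (t - s) := by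
    intro s t hst
    rcases eq_or_lt_of_le hst with rfl | hst
    · show dist (φ s).snd (φ s).snd = l * (s - s)
      simp [dist_self]
    · set m : ℝ := min s 0 - 1 with hm
      set M : ℝ := max t 1 + 1 with hM
      have hms : m < s := by rw [hm]; linarith [min_le_left s 0]
      have hm0 : m < 0 := by rw [hm]; linarith [min_le_right s 0]
      have htM : t < M := by rw [hM]; linarith [le_max_left t 1]
      have h1M : (1:ℝ) < M := by rw [hM]; linarith [le_max_right t 1]
      have e1 := hQ m s t M hms hst htM
      have e2 := hQ m 0 1 M hm0 one_pos h1M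
      have hMm : (0:ℝ) < M - m := by linarith
      rw [show (1:ℝ) - 0 = 1 by ring, mul_one] at e2
      have hmain : F s t * (M - m) = l * (t - s) * (M - m) := by
        rw [e1, ← e2]; ring
      exact mul_right_cancel₀ (ne_of_gt hMm) hmain
  have hl0 : 0 ≤ l := hFnn 0 1
  rcases eq_or_lt_of_le hl0 with hl0' | hlpos
  · rcases le_total s t with h | h
    · have h1 := claim s t h
      rw [← hl0', zero_mul] at h1
      exact dist_eq_zero.mp h1
    · have h1 := claim t s h
      rw [← hl0', zero_mul] at h1
      exact (dist_eq_zero.mp h1).symm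
  · exfalso
    apply hnoline
    refine ⟨fun t => (φ (t / l)).snd, Isometry.of_dist_eq fun x y => ?_⟩
    have key : ∀ x y : ℝ, x ≤ y → dist (φ (x / l)).snd (φ (y / l)).snd = y - x := by
      intro x y hxy
      have hxy' : x / l ≤ y / l := by gcongr
      have hc : dist (φ (x / l)).snd (φ (y / l)).snd = l * (y / l - x / l) :=
        claim (x / l) (y / l) hxy'
      rw [hc, mul_sub, mul_div_cancel₀ _ (ne_of_gt hlpos), mul_div_cancel₀ _ (ne_of_gt hlpos)]
    show dist (φ (x / l)).snd (φ (y / l)).snd = dist x y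
    rcases le_total x y with h | h
    · rw [key x y h, Real.dist_eq, abs_of_nonpos (by linarith)]; ring
    · rw [dist_comm, key y x h, Real.dist_eq, abs_of_nonneg (by linarith)]

end aux

/-- if `X` contains no lines and every isometry of `X` fixes `x₀`, then
every isometry of `Y = ℝ^k × X` maps the slice `ℝ^k × {x₀}` into itself. -/
theorem stmt3 {k : ℕ} {X : Type*} [MetricSpace X] (x₀ : X)
    (hnoline : ¬ ∃ φ : ℝ → X, Isometry φ)
    (hfix : ∀ φ : X ≃ᵢ X, φ x₀ = x₀)
    (g : Y k X ≃ᵢ Y k X) (v : E k) :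
    ∃ w : E k, g ((WithLp.equiv 2 (E k × X)).symm (v, x₀))
      = (WithLp.equiv 2 (E k × X)).symm (w, x₀) := by
  classical
  set eqv := WithLp.equiv 2 (E k × X) with heqv
  -- slice constancy for any isometry equiv of Y
  have slice : ∀ (h : Y k X ≃ᵢ Y k X) (u u' : E k) (a : X),
      (h (eqv.symm (u, a))).snd = (h (eqv.symm (u', a))).snd := by
    intro h u u' a
    by_cases huv : u = u'
    · rw [huv]
    · set w : E k := u' - u with hw
      have hwne : w ≠ 0 := sub_ne_zero.mpr (Ne.symm huv)
      have hr : (0:ℝ) < ‖w‖ := norm_pos_iff.mpr hwne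
      set φ : ℝ → Y k X := fun t => eqv.symm (u + (t / ‖w‖) • w, a) with hφdef
      have hφ : Isometry φ := by
        apply Isometry.of_dist_eq
        intro s t
        have hc : dist (φ s) (φ t) ^ 2 = dist s t ^ 2 := by
          rw [dist_sq_Y]
          have h1 : (φ s).fst = u + (s / ‖w‖) • w := rfl
          have h2 : (φ t).fst = u + (t / ‖w‖) • w := rfl
          have h3 : (φ s).snd = a := rfl
          have h4 : (φ t).snd = a := rfl
          rw [h1, h2, h3, h4, dist_self, dist_eq_norm]
          have hv : u + (s / ‖w‖) • w - (u + (t / ‖w‖) • w) = ((s - t) / ‖w‖) • w := by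
            module
          rw [hv, norm_smul, Real.norm_eq_abs, abs_div, abs_of_pos hr,
            div_mul_cancel₀ _ (ne_of_gt hr), Real.dist_eq]
          ring
        exact (sq_eq_sq₀ dist_nonneg dist_nonneg).mp hc
      have hgφ : Isometry (fun t => h (φ t)) := h.isometry.comp hφ
      have hconst := line_snd_const hnoline _ hgφ 0 ‖w‖
      have h0 : φ 0 = eqv.symm (u, a) := by
        simp [hφdef]
      have h1 : φ ‖w‖ = eqv.symm (u', a) := by
        have huu : u + (u' - u) = u' := by abel
        simp only [hφdef, div_self (ne_of_gt hr), div_self (show ‖u' - u‖ ≠ 0 from ne_of_gt hr), one_smul, hw, huu]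
      rw [h0, h1] at hconst
      exact hconst
  -- the induced map on X and its inverse
  set β : X → X := fun a => (g (eqv.symm (0, a))).snd with hβ
  set β' : X → X := fun a => (g.symm (eqv.symm (0, a))).snd with hβ'
  have hpair : ∀ p : Y k X, p = eqv.symm (p.fst, p.snd) := fun p => rfl
  have hlip : ∀ (h : Y k X ≃ᵢ Y k X) (a b : X),
      dist (h (eqv.symm (0, a))).snd (h (eqv.symm (0, b))).snd ≤ dist a b := by
    intro h a b
    have hd := h.isometry.dist_eq (eqv.symm (0, a)) (eqv.symm (0, b))
    have h1 := dist_sq_Y (h (eqv.symm (0, a))) (h (eqv.symm (0, b)))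
    have h2 := dist_sq_Y (eqv.symm (0, a) : Y k X) (eqv.symm (0, b))
    have hfst : dist ((eqv.symm (0, a) : Y k X)).fst ((eqv.symm (0, b) : Y k X)).fst = 0 :=
      dist_self _
    have hsnd' : dist ((eqv.symm (0, a) : Y k X)).snd ((eqv.symm (0, b) : Y k X)).snd = dist a b :=
      rfl
    rw [hd] at h1
    rw [hfst, hsnd'] at h2
    nlinarith [dist_nonneg (x := (h (eqv.symm (0, a))).snd) (y := (h (eqv.symm (0, b))).snd),
      dist_nonneg (x := (h (eqv.symm (0, a))).fst) (y := (h (eqv.symm (0, b))).fst),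
      dist_nonneg (x := a) (y := b)]
  have hinv : ∀ a : X, β' (β a) = a := by
    intro a
    have h1 : g (eqv.symm (0, a)) = eqv.symm ((g (eqv.symm (0, a))).fst, β a) := hpair _
    have h2 : (g.symm (eqv.symm ((g (eqv.symm (0, a))).fst, β a))).snd
        = (g.symm (eqv.symm (0, β a))).snd := slice g.symm _ 0 _
    have h3 : g.symm (g (eqv.symm (0, a))) = eqv.symm (0, a) := g.symm_apply_apply _
    calc β' (β a) = (g.symm (eqv.symm (0, β a))).snd := rfl
      _ = (g.symm (eqv.symm ((g (eqv.symm (0, a))).fst, β a))).snd := h2.symm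
      _ = (g.symm (g (eqv.symm (0, a)))).snd := by rw [← h1]
      _ = a := by rw [h3]; exact rfl
  have hinv' : ∀ a : X, β (β' a) = a := by
    intro a
    have h1 : g.symm (eqv.symm (0, a)) = eqv.symm ((g.symm (eqv.symm (0, a))).fst, β' a) := hpair _
    have h2 : (g (eqv.symm ((g.symm (eqv.symm (0, a))).fst, β' a))).snd
        = (g (eqv.symm (0, β' a))).snd := slice g _ 0 _
    have h3 : g (g.symm (eqv.symm (0, a))) = eqv.symm (0, a) := g.apply_symm_apply _
    calc β (β' a) = (g (eqv.symm (0, β' a))).snd := rfl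
      _ = (g (eqv.symm ((g.symm (eqv.symm (0, a))).fst, β' a))).snd := h2.symm
      _ = (g (g.symm (eqv.symm (0, a)))).snd := by rw [← h1]
      _ = a := by rw [h3]; exact rfl
  have hβiso : Isometry β := by
    apply Isometry.of_dist_eq
    intro a b
    have h1 : dist (β a) (β b) ≤ dist a b := hlip g a b
    have h2 : dist (β' (β a)) (β' (β b)) ≤ dist (β a) (β b) := hlip g.symm (β a) (β b)
    rw [hinv a, hinv b] at h2
    exact le_antisymm h1 h2
  set Φ : X ≃ᵢ X :=
    { toFun := β
      invFun := β'
      left_inv := hinv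
      right_inv := hinv'
      isometry_toFun := hβiso } with hΦ
  have hfixβ : β x₀ = x₀ := hfix Φ
  refine ⟨(g (eqv.symm (v, x₀))).fst, ?_⟩
  have hsnd2 : (g (eqv.symm (v, x₀))).snd = β x₀ := slice g v 0 x₀
  rw [hfixβ] at hsnd2
  calc g (eqv.symm (v, x₀)) = eqv.symm ((g (eqv.symm (v, x₀))).fst, (g (eqv.symm (v, x₀))).snd) :=
        hpair _
    _ = eqv.symm ((g (eqv.symm (v, x₀))).fst, x₀) := by rw [hsnd2]
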